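/- Let V be a finite-dimensional real inner product space, K ⊆ V a closed convex cone, and K* = {D ∈ V : ⟨D, γ⟩ ≥ 0 for all γ ∈ K} its dual cone. Let A ∈ V satisfy ⟨A, γ⟩ > 0 for all γ ∈ K \ {0}, and let P ∈ K*. Then for D ∈ V the following are equivalent: (i) ⟨D, γ⟩ ≥ 0 for every γ ∈ K with ⟨P, γ⟩ = 0; (ii) for every ε > 0 there exists α > 0 such that D + εA + αP ∈ K*. -/

import Mathlib

theorem stmt_13 {V : Type*} [NormedAddCommGroup V] [InnerProductSpace ℝ V]
    [FiniteDimensional ℝ V]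
    (K : Set V) (hKclosed : IsClosed K)
    (hKsmul : ∀ (c : ℝ), 0 ≤ c → ∀ x ∈ K, c • x ∈ K)
    (hKadd : ∀ x ∈ K, ∀ y ∈ K, x + y ∈ K)
    (A : V) (hA : ∀ γ ∈ K, γ ≠ 0 → 0 < (inner ℝ A γ : ℝ))
    (P : V) (hP : ∀ γ ∈ K, 0 ≤ (inner ℝ P γ : ℝ))
    (D : V) :
    (∀ γ ∈ K, (inner ℝ P γ : ℝ) = 0 → 0 ≤ (inner ℝ D γ : ℝ)) ↔
    (∀ ε > (0 : ℝ), ∃ α > (0 : ℝ),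
      ∀ γ ∈ K, 0 ≤ (inner ℝ (D + ε • A + α • P) γ : ℝ)) := by
  constructor
  · intro h ε hε
    by_contra hcon
    push_neg at hcon
    -- for each n, a bad unit vector
    have key : ∀ n : ℕ, ∃ γ ∈ K ∩ Metric.sphere (0 : V) 1,
        (inner ℝ (D + ε • A) γ : ℝ) + (n + 1) * (inner ℝ P γ : ℝ) < 0 := by
      intro n
      obtain ⟨γ, hγK, hbad⟩ := hcon ((n : ℝ) + 1) (by positivity)
      have hγ0 : γ ≠ 0 := by
        rintro rfl
        simp at hbad
      have hnorm : (0:ℝ) < ‖γ‖ := norm_pos_iff.mpr hγ0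
      refine ⟨‖γ‖⁻¹ • γ, ⟨hKsmul _ (by positivity) _ hγK, ?_⟩, ?_⟩
      · simp [norm_smul, abs_of_pos (inv_pos.mpr hnorm), inv_mul_cancel₀ hnorm.ne']
      · have : (inner ℝ (D + ε • A + ((n:ℝ)+1) • P) γ : ℝ) < 0 := hbad
        rw [inner_add_left, real_inner_smul_left] at this
        rw [real_inner_smul_right, real_inner_smul_right]
        have h2 : (inner ℝ (D + ε • A) γ : ℝ) + ((n:ℝ)+1) * (inner ℝ P γ : ℝ) < 0 := by
          linarith
        calc ‖γ‖⁻¹ * (inner ℝ (D + ε • A) γ : ℝ) + ((n:ℝ)+1) * (‖γ‖⁻¹ * (inner ℝ P γ : ℝ))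
            = ‖γ‖⁻¹ * ((inner ℝ (D + ε • A) γ : ℝ) + ((n:ℝ)+1) * (inner ℝ P γ : ℝ)) := by ring
          _ < 0 := mul_neg_of_pos_of_neg (inv_pos.mpr hnorm) h2
    choose γ hγmem hγbad using key
    have hcpt : IsCompact (K ∩ Metric.sphere (0 : V) 1) :=
      (isCompact_sphere (0:V) 1).inter_left hKclosed
    obtain ⟨a, haS, φ, hφ, hlim⟩ := hcpt.tendsto_subseq hγmem
    obtain ⟨haK, hasph⟩ := haS
    have ha0 : a ≠ 0 := by
      intro h0
      rw [h0] at hasph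
      simp at hasph
    -- continuity of inner products
    have hlimDA : Filter.Tendsto (fun n => (inner ℝ (D + ε • A) (γ (φ n)) : ℝ))
        Filter.atTop (nhds (inner ℝ (D + ε • A) a : ℝ)) :=
      ((continuous_inner.comp (continuous_const.prodMk continuous_id)).continuousAt.tendsto.comp
        hlim)
    have hlimP : Filter.Tendsto (fun n => (inner ℝ P (γ (φ n)) : ℝ))
        Filter.atTop (nhds (inner ℝ P a : ℝ)) :=
      ((continuous_inner.comp (continuous_const.prodMk continuous_id)).continuousAt.tendsto.comp
        hlim)
    -- bound: ⟨P, γ n⟩ ≤ C / (n+1)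
    set C : ℝ := ‖D + ε • A‖ with hC
    have hbound : ∀ n : ℕ, (inner ℝ P (γ n) : ℝ) ≤ C / ((n:ℝ) + 1) := by
      intro n
      have h1 := hγbad n
      have h2 : (inner ℝ (D + ε • A) (γ n) : ℝ) ≥ -C := by
        have := abs_real_inner_le_norm (D + ε • A) (γ n)
        have hn1 : ‖γ n‖ = 1 := by
          have := (hγmem n).2
          simpa using this
        rw [hn1, mul_one] at this
        have := neg_abs_le (inner ℝ (D + ε • A) (γ n) : ℝ)
        linarith [abs_real_inner_le_norm (D + ε • A) (γ n), neg_abs_le (inner ℝ (D + ε • A) (γ n) : ℝ)]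
      have hpos : (0:ℝ) < (n:ℝ) + 1 := by positivity
      rw [le_div_iff₀ hpos]
      nlinarith
    -- so ⟨P, a⟩ = 0
    have hPa : (inner ℝ P a : ℝ) = 0 := by
      have hsq : Filter.Tendsto (fun n => (inner ℝ P (γ (φ n)) : ℝ)) Filter.atTop (nhds 0) := by
        apply squeeze_zero
        · intro n; exact hP _ (hγmem (φ n)).1
        · intro n
          calc (inner ℝ P (γ (φ n)) : ℝ) ≤ C / ((φ n : ℝ) + 1) := hbound (φ n)
            _ ≤ C / ((n:ℝ) + 1) := by
                apply div_le_div_of_nonneg_left _ (by positivity) _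
                · exact norm_nonneg _
                · have h3 : (n : ℝ) ≤ (φ n : ℝ) := Nat.cast_le.mpr hφ.le_apply
                  linarith
        · exact Filter.Tendsto.div_atTop tendsto_const_nhds
            (Filter.tendsto_atTop_add_const_right _ 1 tendsto_natCast_atTop_atTop)
      exact tendsto_nhds_unique hlimP hsq
    -- limit of D + εA part is ≤ 0
    have hDAle : (inner ℝ (D + ε • A) a : ℝ) ≤ 0 := by
      apply le_of_tendsto hlimDA
      filter_upwards with n
      have h1 := hγbad (φ n)
      have h2 : 0 ≤ ((φ n : ℝ) + 1) * (inner ℝ P (γ (φ n)) : ℝ) := by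
        apply mul_nonneg (by positivity) (hP _ (hγmem (φ n)).1)
      linarith
    have hDa : 0 ≤ (inner ℝ D a : ℝ) := h a haK hPa
    have hAa : 0 < (inner ℝ A a : ℝ) := hA a haK ha0
    rw [inner_add_left, real_inner_smul_left] at hDAle
    nlinarith
  · intro h γ hγ hPγ
    by_cases hγ0 : γ = 0
    · simp [hγ0]
    · have hAγ : 0 < (inner ℝ A γ : ℝ) := hA γ hγ hγ0
      by_contra hD
      push_neg at hD
      set ε : ℝ := -(inner ℝ D γ : ℝ) / (2 * (inner ℝ A γ : ℝ)) with hεdef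
      have hε : 0 < ε := by
        apply div_pos (by linarith) (by linarith)
      obtain ⟨α, hα, hall⟩ := h ε hε
      have := hall γ hγ
      rw [inner_add_left, inner_add_left, real_inner_smul_left, real_inner_smul_left, hPγ] at this
      have hεA : ε * (inner ℝ A γ : ℝ) = -(inner ℝ D γ : ℝ) / 2 := by
        field_simp [hεdef]
        rw [hεdef, div_mul_eq_mul_div, div_mul_eq_mul_div, div_eq_iff (ne_of_gt (by linarith))]; ring
      rw [hεA] at this
      linarith
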